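/- Let p, q be natural numbers and let a : Fin p → ℚ and f : Fin q → ℚ be antitone. For μ ∈ ℚ set k_a(μ) := the number of indices i < p with a i ≤ μ, and k_f(μ) := the number of indices j < q with f j ≤ μ. Then the following two conditions are equivalent. (A): for every μ ∈ ℚ, k_f(μ) ≤ k_a(μ), and whenever k_f(μ) = k_a(μ) = k one has a (p−1−i) = f (q−1−i) for all i < k. (B): q ≤ p; a (p−i) ≤ f (q−i) for every i with 1 ≤ i ≤ q; and for every integer j with 1 ≤ j ≤ q, if [j = p, or (j < p and a (p−j) < a (p−j−1))] and [j = q, or (j < q and f (q−j) < f (q−j−1))], then either [j < p and a (p−j−1) ≤ f (q−j)] or [a (p−1−i) = f (q−1−i) for all i < j]. -/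
import Mathlib

private lemma card_tail (p c : ℕ) : (Finset.univ.filter fun i : Fin p => c ≤ (i:ℕ)).card = p - c := by
  rw [Finset.card_filter, Fin.sum_univ_eq_sum_range (fun i => if c ≤ i then 1 else 0),
    ← Finset.card_filter, Finset.range_eq_Ico, Finset.Ico_filter_le, Nat.card_Ico]
  simp

private lemma k_le_card {p : ℕ} (a : Fin p → ℚ) (μ : ℚ) :
    (Finset.univ.filter fun i : Fin p => a i ≤ μ).card ≤ p := by
  simpa using Finset.card_filter_le Finset.univ (fun i : Fin p => a i ≤ μ)

private lemma k_ge {p : ℕ} (a : Fin p → ℚ) (μ : ℚ) (m : ℕ) (hm : m ≤ p)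
    (h : ∀ i : Fin p, p - m ≤ (i:ℕ) → a i ≤ μ) :
    m ≤ (Finset.univ.filter fun i : Fin p => a i ≤ μ).card := by
  have hsub : (Finset.univ.filter fun i : Fin p => p - m ≤ (i:ℕ)) ⊆
      (Finset.univ.filter fun i : Fin p => a i ≤ μ) := by
    intro i hi
    simp only [Finset.mem_filter, Finset.mem_univ, true_and] at hi ⊢
    exact h i hi
  have := Finset.card_le_card hsub
  rw [card_tail] at this
  omega

private lemma k_le {p : ℕ} (a : Fin p → ℚ) (μ : ℚ) (m : ℕ)
    (h : ∀ i : Fin p, a i ≤ μ → p - m ≤ (i:ℕ)) :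
    (Finset.univ.filter fun i : Fin p => a i ≤ μ).card ≤ m := by
  have hsub : (Finset.univ.filter fun i : Fin p => a i ≤ μ) ⊆
      (Finset.univ.filter fun i : Fin p => p - m ≤ (i:ℕ)) := by
    intro i hi
    simp only [Finset.mem_filter, Finset.mem_univ, true_and] at hi ⊢
    exact h i hi
  have := Finset.card_le_card hsub
  rw [card_tail] at this
  omega

private lemma k_iff {p : ℕ} {a : Fin p → ℚ} (ha : Antitone a) (μ : ℚ) (i : Fin p) :
    a i ≤ μ ↔ p - (Finset.univ.filter fun i : Fin p => a i ≤ μ).card ≤ (i:ℕ) := by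
  set k := (Finset.univ.filter fun i : Fin p => a i ≤ μ).card with hk
  have hkp : k ≤ p := k_le_card a μ
  constructor
  · intro hi
    by_contra hlt
    push_neg at hlt
    have hip := i.isLt
    have : p - (i:ℕ) ≤ k := by
      refine k_ge a μ (p - (i:ℕ)) (by omega) ?_
      intro j hj
      exact le_trans (ha (by omega : i ≤ j)) hi
    omega
  · intro hi
    by_contra hgt
    push_neg at hgt
    have : k ≤ p - ((i:ℕ) + 1) := by
      refine k_le a μ (p - ((i:ℕ)+1)) ?_
      intro j hj
      by_contra hji
      push_neg at hji
      have hle : j ≤ i := by omega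
      exact absurd (le_trans (ha hle) hj) (not_le.mpr hgt)
    have hip := i.isLt
    omega

/-- equivalence of the two characterizations of quotient bundles,
in terms of the antitone slope data `a : Fin p → ℚ` of `E` and `f : Fin q → ℚ` of `F`. -/
theorem quotient_conditions_equiv
    (p q : ℕ) (a : Fin p → ℚ) (f : Fin q → ℚ)
    (ha : Antitone a) (hf : Antitone f) :
    ((∀ μ : ℚ,
        (Finset.univ.filter fun j : Fin q => f j ≤ μ).card ≤
          (Finset.univ.filter fun i : Fin p => a i ≤ μ).card) ∧
      (∀ μ : ℚ,
        (Finset.univ.filter fun j : Fin q => f j ≤ μ).card =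
            (Finset.univ.filter fun i : Fin p => a i ≤ μ).card →
          ∀ i : ℕ, i < (Finset.univ.filter fun j : Fin q => f j ≤ μ).card →
            ∀ (h1 : p - 1 - i < p) (h2 : q - 1 - i < q),
              a ⟨p - 1 - i, h1⟩ = f ⟨q - 1 - i, h2⟩))
    ↔
    (q ≤ p ∧
      (∀ i : ℕ, 1 ≤ i → i ≤ q →
        ∀ (h1 : p - i < p) (h2 : q - i < q), a ⟨p - i, h1⟩ ≤ f ⟨q - i, h2⟩) ∧
      (∀ j : ℕ, 1 ≤ j → j ≤ q →
        (j = p ∨ (j < p ∧ ∀ (h1 : p - j < p) (h2 : p - j - 1 < p),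
            a ⟨p - j, h1⟩ < a ⟨p - j - 1, h2⟩)) →
        (j = q ∨ (j < q ∧ ∀ (h1 : q - j < q) (h2 : q - j - 1 < q),
            f ⟨q - j, h1⟩ < f ⟨q - j - 1, h2⟩)) →
        ((j < p ∧ ∀ (h1 : p - j - 1 < p) (h2 : q - j < q),
            a ⟨p - j - 1, h1⟩ ≤ f ⟨q - j, h2⟩) ∨
          (∀ i : ℕ, i < j → ∀ (h1 : p - 1 - i < p) (h2 : q - 1 - i < q),
            a ⟨p - 1 - i, h1⟩ = f ⟨q - 1 - i, h2⟩)))) := by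
  constructor
  · rintro ⟨hA1, hA2⟩
    -- q ≤ p
    have hqp : q ≤ p := by
      rcases Nat.eq_zero_or_pos q with h0 | h0
      · have := Nat.zero_le p; omega
      · set μ := f ⟨0, h0⟩ with hμ
        have h1 : q ≤ (Finset.univ.filter fun j : Fin q => f j ≤ μ).card := by
          refine k_ge f μ q le_rfl ?_
          intro j _
          exact hf (show (⟨0, h0⟩ : Fin q) ≤ j from Fin.mk_le_mk.mpr (Nat.zero_le _))
        have h2 := hA1 μ
        have h3 := k_le_card a μ
        omega
    -- second condition B2
    have hB2 : ∀ i : ℕ, 1 ≤ i → i ≤ q →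
        ∀ (h1 : p - i < p) (h2 : q - i < q), a ⟨p - i, h1⟩ ≤ f ⟨q - i, h2⟩ := by
      intro i hi1 hiq h1 h2
      set μ := f ⟨q - i, h2⟩ with hμ
      have hkf : i ≤ (Finset.univ.filter fun j : Fin q => f j ≤ μ).card := by
        refine k_ge f μ i hiq ?_
        intro j hj
        exact hf (show (⟨q - i, h2⟩ : Fin q) ≤ j from Fin.mk_le_mk.mpr hj)
      have hka := le_trans hkf (hA1 μ)
      have hkap := k_le_card a μ
      exact (k_iff ha μ ⟨p - i, h1⟩).mpr (by simp only [Fin.val_mk]; omega)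
    refine ⟨hqp, hB2, ?_⟩
    intro j hj1 hjq hva hvf
    by_cases hjp : j = p
    · -- then j = p = q
      right
      have hq : q = p := le_antisymm hqp (by omega)
      have h0 : 0 < q := by omega
      set μ := f ⟨0, h0⟩ with hμ
      have hkf_ge : q ≤ (Finset.univ.filter fun j : Fin q => f j ≤ μ).card := by
        refine k_ge f μ q le_rfl ?_
        intro jj _
        exact hf (show (⟨0, h0⟩ : Fin q) ≤ jj from Fin.mk_le_mk.mpr (Nat.zero_le _))
      have hkf_le := k_le_card f μ
      have hka_le := k_le_card a μ
      have h2 := hA1 μ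
      intro i hi hh1 hh2
      exact hA2 μ (by omega) i (by omega) hh1 hh2
    · have hjp' : j < p := by omega
      by_cases hcmp : a ⟨p - j - 1, by omega⟩ ≤ f ⟨q - j, by omega⟩
      · exact Or.inl ⟨hjp', fun h1 h2 => hcmp⟩
      · right
        push_neg at hcmp
        set μ := f ⟨q - j, by omega⟩ with hμ
        have hkf_ge : j ≤ (Finset.univ.filter fun jj : Fin q => f jj ≤ μ).card := by
          refine k_ge f μ j hjq ?_
          intro jj hjj
          exact hf (show (⟨q - j, by omega⟩ : Fin q) ≤ jj from Fin.mk_le_mk.mpr hjj)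
        have hkf_le : (Finset.univ.filter fun jj : Fin q => f jj ≤ μ).card ≤ j := by
          rcases hvf with hjq' | ⟨hjq', hstrict⟩
          · have := k_le_card f μ; omega
          · refine k_le f μ j ?_
            intro jj hjj
            by_contra hlt
            push_neg at hlt
            have h1 : f ⟨q - j - 1, by omega⟩ ≤ f jj :=
              hf (Fin.mk_le_mk.mpr (by omega))
            have h2 := hstrict (by omega) (by omega)
            simp only [hμ] at hjj
            linarith
        have hka_ge : j ≤ (Finset.univ.filter fun i : Fin p => a i ≤ μ).card := by
          refine k_ge a μ j (by omega) ?_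
          intro ii hii
          have h1 : a ii ≤ a ⟨p - j, by omega⟩ := ha (Fin.mk_le_mk.mpr hii)
          have h2 := hB2 j hj1 hjq (by omega) (by omega)
          exact le_trans h1 h2
        have hka_le : (Finset.univ.filter fun i : Fin p => a i ≤ μ).card ≤ j := by
          refine k_le a μ j ?_
          intro ii hii
          by_contra hlt
          push_neg at hlt
          have h1 : a ⟨p - j - 1, by omega⟩ ≤ a ii := ha (Fin.mk_le_mk.mpr (by omega))
          simp only [hμ] at hii
          linarith
        intro i hi h1 h2
        exact hA2 μ (by omega) i (by omega) h1 h2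
  · rintro ⟨hqp, hB2, hB3⟩
    have hA1 : ∀ μ : ℚ,
        (Finset.univ.filter fun j : Fin q => f j ≤ μ).card ≤
          (Finset.univ.filter fun i : Fin p => a i ≤ μ).card := by
      intro μ
      set k := (Finset.univ.filter fun j : Fin q => f j ≤ μ).card with hk
      rcases Nat.eq_zero_or_pos k with h0 | h0
      · omega
      · have hkq : k ≤ q := k_le_card f μ
        refine k_ge a μ k (by omega) ?_
        intro i hi
        have hfq : f ⟨q - k, by omega⟩ ≤ μ :=
          (k_iff hf μ ⟨q - k, by omega⟩).mpr (by simp only [Fin.val_mk]; omega)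
        have haf := hB2 k h0 hkq (by omega) (by omega)
        have hai : a i ≤ a ⟨p - k, by omega⟩ := ha (Fin.mk_le_mk.mpr hi)
        linarith
    refine ⟨hA1, ?_⟩
    intro μ heq i hik h1 h2
    set k := (Finset.univ.filter fun j : Fin q => f j ≤ μ).card with hk
    have hk1 : 1 ≤ k := by omega
    have hkq : k ≤ q := k_le_card f μ
    have hkp : k ≤ p := by omega
    have hfk : f ⟨q - k, by omega⟩ ≤ μ :=
      (k_iff hf μ ⟨q - k, by omega⟩).mpr (by simp only [Fin.val_mk]; omega)
    have hva : k = p ∨ (k < p ∧ ∀ (hh1 : p - k < p) (hh2 : p - k - 1 < p),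
        a ⟨p - k, hh1⟩ < a ⟨p - k - 1, hh2⟩) := by
      by_cases hkp' : k = p
      · exact Or.inl hkp'
      · refine Or.inr ⟨by omega, fun hh1 hh2 => ?_⟩
        have hle : a ⟨p - k, hh1⟩ ≤ μ :=
          (k_iff ha μ ⟨p - k, hh1⟩).mpr (by simp only [Fin.val_mk]; omega)
        have hgt : ¬ a ⟨p - k - 1, hh2⟩ ≤ μ := by
          intro hle'
          have := (k_iff ha μ ⟨p - k - 1, hh2⟩).mp hle'
          simp only [Fin.val_mk] at this
          omega
        push_neg at hgt
        linarith
    have hvf : k = q ∨ (k < q ∧ ∀ (hh1 : q - k < q) (hh2 : q - k - 1 < q),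
        f ⟨q - k, hh1⟩ < f ⟨q - k - 1, hh2⟩) := by
      by_cases hkq' : k = q
      · exact Or.inl hkq'
      · refine Or.inr ⟨by omega, fun hh1 hh2 => ?_⟩
        have hle : f ⟨q - k, hh1⟩ ≤ μ :=
          (k_iff hf μ ⟨q - k, hh1⟩).mpr (by simp only [Fin.val_mk]; omega)
        have hgt : ¬ f ⟨q - k - 1, hh2⟩ ≤ μ := by
          intro hle'
          have := (k_iff hf μ ⟨q - k - 1, hh2⟩).mp hle'
          simp only [Fin.val_mk] at this
          omega
        push_neg at hgt
        linarith
    rcases hB3 k hk1 hkq hva hvf with ⟨hkp', hle⟩ | heqs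
    · exfalso
      have hagt : ¬ a ⟨p - k - 1, by omega⟩ ≤ μ := by
        intro hle'
        have := (k_iff ha μ ⟨p - k - 1, by omega⟩).mp hle'
        simp only [Fin.val_mk] at this
        omega
      push_neg at hagt
      have := hle (by omega) (by omega)
      linarith
    · exact heqs i hik h1 h2
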